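/- For any P in the open northern hemisphere S^{n+1}_{N,+} with P ≠ N, writing (θ, r) = Id^{-1}∘α_N∘Ψ_N(P) (so θ ∈ S^n, r > 0 and the point is rθ), the image under Id^{-1}∘α_N of H(P) ∩ S^{n+1}_{N,+} equals the half-space {x ∈ ℝ^{n+1} : x·θ ≤ r}. -/

import Mathlib

open scoped RealInnerProductSpace

noncomputable def northPole (n : ℕ) : EuclideanSpace ℝ (Fin (n+2)) :=
  EuclideanSpace.single (Fin.last (n+1)) (1 : ℝ)

noncomputable def sphBlowUp {n : ℕ} (P : EuclideanSpace ℝ (Fin (n+2))) :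
    EuclideanSpace ℝ (Fin (n+2)) :=
  (Real.sqrt (1 - ⟪northPole n, P⟫ ^ 2))⁻¹ •
    (northPole n - ⟪northPole n, P⟫ • P)

def hemi {n : ℕ} (P : EuclideanSpace ℝ (Fin (n+2))) :
    Set (EuclideanSpace ℝ (Fin (n+2))) :=
  {Q | Q ∈ Metric.sphere (0 : EuclideanSpace ℝ (Fin (n+2))) 1 ∧ 0 ≤ ⟪P, Q⟫}

/-- `Id⁻¹ ∘ α_N` : central projection followed by dropping the last coordinate. -/
noncomputable def centProj {n : ℕ} (Q : EuclideanSpace ℝ (Fin (n+2))) :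
    EuclideanSpace ℝ (Fin (n+1)) :=
  WithLp.toLp 2 (fun i => Q i.castSucc / Q (Fin.last (n+1)))

/-- For `P` in the punctured open northern hemisphere, writing
`(θ, r)` for the polar coordinates of `Id⁻¹∘α_N∘Ψ_N(P)`, the image under
`Id⁻¹∘α_N` of `H(P) ∩ S^{n+1}_{N,+}` is the half-space `{x : x·θ ≤ r}`. -/
theorem stmt_15 {n : ℕ} (P : EuclideanSpace ℝ (Fin (n+2)))
    (hP : P ∈ Metric.sphere (0 : EuclideanSpace ℝ (Fin (n+2))) 1)
    (hN : 0 < ⟪northPole n, P⟫) (hne : P ≠ northPole n) :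
    centProj '' (hemi P ∩ {Q | 0 < ⟪northPole n, Q⟫}) =
      {x : EuclideanSpace ℝ (Fin (n+1)) |
        ⟪x, ‖centProj (sphBlowUp P)‖⁻¹ • centProj (sphBlowUp P)⟫ ≤
          ‖centProj (sphBlowUp P)‖} := by
  have hNn : ‖northPole n‖ = 1 := by simp [northPole]
  have hPn : ‖P‖ = 1 := by simpa using hP
  have hinner2 : ∀ a b : EuclideanSpace ℝ (Fin (n+2)), ⟪a,b⟫ = ∑ j, a j * b j := by
    intro a b; simp [PiLp.inner_apply, RCLike.inner_apply, conj_trivial]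
    exact Finset.sum_congr rfl fun j _ => mul_comm _ _
  have hinner1 : ∀ a b : EuclideanSpace ℝ (Fin (n+1)), ⟪a,b⟫ = ∑ j, a j * b j := by
    intro a b; simp [PiLp.inner_apply, RCLike.inner_apply, conj_trivial]
    exact Finset.sum_congr rfl fun j _ => mul_comm _ _
  have hNinner : ∀ Q : EuclideanSpace ℝ (Fin (n+2)), ⟪northPole n, Q⟫ = Q (Fin.last (n+1)) := by
    intro Q; simp [northPole, EuclideanSpace.inner_single_left]
  set c : ℝ := ⟪northPole n, P⟫ with hc
  have hc0 : 0 < c := hN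
  have hc1 : c < 1 := by
    rw [hc, inner_lt_one_iff_real_of_norm_eq_one hNn hPn]
    exact fun h => hne h.symm
  have hs : 0 < 1 - c^2 := by nlinarith
  have hPlast : P (Fin.last (n+1)) = c := (hNinner P).symm
  set v := centProj (sphBlowUp P) with hvdef
  have hsq : (0:ℝ) < Real.sqrt (1 - c^2) := Real.sqrt_pos.mpr hs
  have hv : ∀ i, v i = -(c/(1-c^2)) * P i.castSucc := by
    intro i
    have hNc : (northPole n) (i.castSucc) = 0 := by
      simp [northPole, EuclideanSpace.single_apply, (Fin.castSucc_lt_last i).ne]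
    have hNl : (northPole n) (Fin.last (n+1)) = 1 := by simp [northPole]
    simp only [hvdef, centProj, sphBlowUp, ← hc, PiLp.smul_apply, PiLp.sub_apply,
      smul_eq_mul, hNc, hNl, hPlast]
    rw [mul_div_mul_left _ _ (by positivity : ((Real.sqrt (1-c^2))⁻¹ : ℝ) ≠ 0)]
    rw [show -(c/(1-c^2)) * P i.castSucc = (-(c * P i.castSucc))/(1-c^2) from by ring,
      div_eq_div_iff (by nlinarith : (1:ℝ) - c * c ≠ 0) hs.ne']
    ring
  have hPsum : ∑ i : Fin (n+1), P i.castSucc * P i.castSucc = 1 - c^2 := by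
    have h1 : ⟪P, P⟫ = 1 := by
      rw [real_inner_self_eq_norm_sq, hPn]; norm_num
    rw [hinner2, Fin.sum_univ_castSucc, hPlast] at h1
    nlinarith
  have hnv2 : ‖v‖^2 = c^2/(1-c^2) := by
    rw [← real_inner_self_eq_norm_sq, hinner1]
    have : ∑ i : Fin (n+1), v i * v i
        = (c/(1-c^2))^2 * ∑ i : Fin (n+1), P i.castSucc * P i.castSucc := by
      rw [Finset.mul_sum]
      exact Finset.sum_congr rfl fun i _ => by rw [hv]; ring
    rw [this, hPsum]
    field_simp
  have hnv : 0 < ‖v‖ := by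
    have h0 : ‖v‖ ≠ 0 := by
      intro h
      have hpos : 0 < c^2/(1-c^2) := by positivity
      rw [← hnv2, h] at hpos; norm_num at hpos
    exact lt_of_le_of_ne (norm_nonneg v) (Ne.symm h0)
  have hcond : ∀ x : EuclideanSpace ℝ (Fin (n+1)),
      (⟪x, ‖v‖⁻¹ • v⟫ ≤ ‖v‖) ↔ 0 ≤ (∑ i, x i * P i.castSucc) + c := by
    intro x
    rw [real_inner_smul_right, inv_mul_le_iff₀ hnv]
    have h1 : ⟪x, v⟫ = -(c/(1-c^2)) * (∑ i, x i * P i.castSucc) := by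
      rw [hinner1, Finset.mul_sum]
      exact Finset.sum_congr rfl fun i _ => by rw [hv]; ring
    have h2 : ‖v‖ * ‖v‖ = c^2/(1-c^2) := by rw [← hnv2]; ring
    rw [h1, h2]
    set S := ∑ i, x i * P i.castSucc
    have heq : -(c/(1-c^2)) * S = (-(c*S))/(1-c^2) := by ring
    rw [heq, div_le_div_iff₀ hs hs]
    constructor
    · intro h
      nlinarith [mul_pos hc0 hs, mul_nonneg hc0.le hs.le, sq_nonneg (S + c), sq_nonneg c,
        mul_pos hs hc0]
    · intro h; nlinarith [mul_nonneg (mul_nonneg hs.le hc0.le) h]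
  ext x
  simp only [Set.mem_image, Set.mem_setOf_eq, hemi, Set.mem_inter_iff,
    mem_sphere_iff_norm, sub_zero]
  rw [hcond x]
  constructor
  · rintro ⟨Q, ⟨⟨hQs, hQP⟩, hQl⟩, rfl⟩
    have hql : 0 < Q (Fin.last (n+1)) := by rw [← hNinner Q]; exact hQl
    have hPQ : ⟪P, Q⟫ = (∑ i : Fin (n+1), P i.castSucc * Q i.castSucc)
        + c * Q (Fin.last (n+1)) := by
      rw [hinner2, Fin.sum_univ_castSucc, hPlast]
    have key : (∑ i, centProj Q i * P i.castSucc) + c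
        = ⟪P,Q⟫ / Q (Fin.last (n+1)) := by
      rw [hPQ, add_div]
      congr 1
      · rw [Finset.sum_div]
        exact Finset.sum_congr rfl fun i _ => by
          simp only [centProj, PiLp.toLp_apply]; field_simp
      · rw [mul_div_assoc, div_self hql.ne', mul_one]
    rw [key]
    exact div_nonneg hQP hql.le
  · intro hx
    set W : EuclideanSpace ℝ (Fin (n+2)) := WithLp.toLp 2 (Fin.snoc (x : Fin (n+1) → ℝ) 1 : Fin (n+2) → ℝ) with hW
    have hWlast : W (Fin.last (n+1)) = 1 := by simp [hW, Fin.snoc_last]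
    have hWcast : ∀ i : Fin (n+1), W i.castSucc = x i := fun i => by
      simp [hW, Fin.snoc_castSucc]
    have hW0 : W ≠ 0 := by
      intro h
      have := congrArg (fun w : EuclideanSpace ℝ (Fin (n+2)) => w (Fin.last (n+1))) h
      rw [hWlast] at this; simpa using this
    have hm : 0 < ‖W‖ := norm_pos_iff.mpr hW0
    refine ⟨‖W‖⁻¹ • W, ⟨⟨?_, ?_⟩, ?_⟩, ?_⟩
    · rw [norm_smul, norm_inv, norm_norm, inv_mul_cancel₀ hm.ne']
    · rw [real_inner_smul_right]
      have hPW : ⟪P, W⟫ = (∑ i : Fin (n+1), P i.castSucc * x i) + c := by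
        rw [hinner2, Fin.sum_univ_castSucc, hPlast, hWlast, mul_one]
        congr 1
        exact Finset.sum_congr rfl fun i _ => by rw [hWcast]
      have : 0 ≤ ⟪P, W⟫ := by
        rw [hPW]
        have : (∑ i : Fin (n+1), P i.castSucc * x i) = ∑ i, x i * P i.castSucc :=
          Finset.sum_congr rfl fun i _ => mul_comm _ _
        rw [this]; exact hx
      positivity
    · rw [hNinner, PiLp.smul_apply, hWlast, smul_eq_mul, mul_one]
      exact inv_pos.mpr hm
    · ext i
      simp only [centProj, PiLp.toLp_apply, PiLp.smul_apply, smul_eq_mul, hWlast, hWcast, mul_one]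
      field_simp
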